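/- Let f : ℝ → ℝ be a reduced function that is analytic on an open neighborhood of 0 and satisfies, for all x, y in a neighborhood of 0 (with x + y also in that neighborhood), the functional equation f(x) + f(y) + 2·f(x)·f(y) + f(x+y)·f(x)·f(y) = f(x+y). Then there exists a real number a such that f(x) = a·x/(1 − a·x) for all x in some neighborhood of 0. -/

import Mathlib

/-- Every reduced function, analytic on an open neighborhood of `0`,
satisfying the functional equation
`f x + f y + 2 * f x * f y + f (x + y) * f x * f y = f (x + y)`
for all `x, y` in a neighborhood of `0` (with `x + y` also in that neighborhood),
is of the form `x ↦ a * x / (1 - a * x)` near `0`. -/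
theorem geometric_functional_equation (f : ℝ → ℝ) (h0 : f 0 = 0)
    (hf : ∃ U ∈ nhds (0 : ℝ), IsOpen U ∧ (∀ x ∈ U, AnalyticAt ℝ f x) ∧
      ∀ x ∈ U, ∀ y ∈ U, x + y ∈ U →
        f x + f y + 2 * f x * f y + f (x + y) * f x * f y = f (x + y)) :
    ∃ a : ℝ, ∀ᶠ x in nhds (0 : ℝ), f x = a * x / (1 - a * x) := by
  obtain ⟨U, hUn, hUo, hUa, hFE⟩ := hf
  have hfc : ContinuousAt f 0 := (hUa 0 (mem_of_mem_nhds hUn)).continuousAt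
  -- eventually |f x| < 1/2
  have hsmall : ∀ᶠ x in nhds (0:ℝ), |f x| < 1/2 := by
    have h1 : {y : ℝ | |y| < 1/2} ∈ nhds (f 0) := by
      rw [h0]
      have : Metric.ball (0:ℝ) (1/2) ∈ nhds (0:ℝ) := Metric.ball_mem_nhds 0 (by norm_num)
      simpa [Real.ball_eq_Ioo, abs_lt, Metric.mem_ball, Real.dist_eq, Set.Ioo] using this
    exact hfc h1
  obtain ⟨ε, hε, hball⟩ := Metric.mem_nhds_iff.mp (Filter.inter_mem hUn hsmall)
  set V := Metric.ball (0:ℝ) ε with hV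
  have hVU : ∀ x ∈ V, x ∈ U := fun x hx => (hball hx).1
  have hVs : ∀ x ∈ V, |f x| < 1/2 := fun x hx => (hball hx).2
  have hVne : ∀ x ∈ V, 1 + f x ≠ 0 := by
    intro x hx
    have := hVs x hx
    rw [abs_lt] at this
    linarith [this.1]
  set g : ℝ → ℝ := fun x => f x / (1 + f x) with hg
  -- additivity of g
  have hadd : ∀ x ∈ Metric.ball (0:ℝ) (ε/2), ∀ y ∈ Metric.ball (0:ℝ) (ε/2),
      g (x + y) = g x + g y := by
    intro x hx y hy
    have hxV : x ∈ V := Metric.ball_subset_ball (by linarith) hx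
    have hyV : y ∈ V := Metric.ball_subset_ball (by linarith) hy
    have hxyV : x + y ∈ V := by
      rw [Metric.mem_ball, Real.dist_eq] at *
      calc |x + y - 0| ≤ |x - 0| + |y - 0| := by rw [sub_zero, sub_zero, sub_zero]; exact abs_add_le x y
        _ < ε := by linarith
    have h := hFE x (hVU x hxV) y (hVU y hyV) (hVU _ hxyV)
    have h1 := hVne x hxV
    have h2 := hVne y hyV
    have h3 := hVne _ hxyV
    simp only [hg]
    field_simp
    linear_combination -h
  -- g is differentiable on V
  have hgd : ∀ x ∈ V, DifferentiableAt ℝ g x := by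
    intro x hx
    exact ((hUa x (hVU x hx)).differentiableAt).div
      ((differentiable_const (1:ℝ)).differentiableAt.add (hUa x (hVU x hx)).differentiableAt)
      (hVne x hx)
  have h0V : (0:ℝ) ∈ V := Metric.mem_ball_self hε
  set a := deriv g 0 with ha
  have hg0 : HasDerivAt g a 0 := (hgd 0 h0V).hasDerivAt
  -- g has derivative a everywhere on small ball
  have hderiv : ∀ x ∈ Metric.ball (0:ℝ) (ε/4), HasDerivAt g a x := by
    intro x hx
    have hxV : x ∈ V := Metric.ball_subset_ball (by linarith) hx
    have hx2 : x ∈ Metric.ball (0:ℝ) (ε/2) := Metric.ball_subset_ball (by linarith) hx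
    -- y ↦ g (x + y) has deriv (deriv g x) at 0
    have hgx : HasDerivAt g (deriv g x) x := (hgd x hxV).hasDerivAt
    have h1 : HasDerivAt (fun y => g (x + y)) (deriv g x) 0 := by
      have hgx0 : HasDerivAt g (deriv g x) (x + 0) := by simpa using hgx
      exact hgx0.comp_const_add x 0
    have h2 : HasDerivAt (fun y => g x + g y) a 0 := hg0.const_add (g x)
    have heq : (fun y => g (x + y)) =ᶠ[nhds (0:ℝ)] (fun y => g x + g y) := by
      have hmem : Metric.ball (0:ℝ) (ε/2) ∈ nhds (0:ℝ) := Metric.ball_mem_nhds 0 (by linarith)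
      filter_upwards [hmem] with y hy
      exact hadd x hx2 y hy
    have h1' : HasDerivAt (fun y => g (x + y)) a 0 := by
      rw [heq.hasDerivAt_iff]
      exact h2
    have : deriv g x = a := h1.unique h1'
    rw [← this]
    exact hgx
  -- g x = a * x on the ball
  have hlin : ∀ x ∈ Metric.ball (0:ℝ) (ε/4), g x = a * x := by
    intro x hx
    set φ := fun x => g x - a * x with hφ
    have hφd : ∀ z ∈ Metric.ball (0:ℝ) (ε/4), HasDerivAt φ 0 z := by
      intro z hz
      have := (hderiv z hz).sub ((hasDerivAt_id z).const_mul a)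
      simp at this
      exact this
    have hc : φ x = φ 0 := by
      refine Convex.is_const_of_fderivWithin_eq_zero (convex_ball 0 (ε/4))
        (fun z hz => ((hφd z hz).differentiableAt).differentiableWithinAt) (fun z hz => ?_)
        hx (Metric.mem_ball_self (by linarith))
      rw [fderivWithin_of_isOpen Metric.isOpen_ball hz]
      have := (hφd z hz).hasFDerivAt.fderiv
      rw [this]
      apply ContinuousLinearMap.ext
      intro w
      simp
    have hg00 : g 0 = 0 := by simp [hg, h0]
    have : φ 0 = 0 := by simp [hφ, hg00]
    rw [this] at hc
    simp only [hφ] at hc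
    linarith [hc]
  refine ⟨a, ?_⟩
  have hmem : Metric.ball (0:ℝ) (ε/4) ∈ nhds (0:ℝ) := Metric.ball_mem_nhds 0 (by linarith)
  filter_upwards [hmem] with x hx
  have hxV : x ∈ V := Metric.ball_subset_ball (by linarith) hx
  have h1 : 1 + f x ≠ 0 := hVne x hxV
  have h2 : g x = a * x := hlin x hx
  have h3 : f x / (1 + f x) = a * x := h2
  have h4 : 1 - a * x ≠ 0 := by
    intro h
    have : a * x = 1 := by linarith
    rw [this] at h3
    field_simp at h3
    linarith
  field_simp at h3 ⊢
  linear_combination h3
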